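/- Let g : ℝ^d → ℝ^{d₁} be C_g-Lipschitz and L_g-smooth, let δ > 0, and let w ∈ ℝ^d be such that ‖(Dg(w))^* u‖² ≥ δ‖u‖² for all u ∈ ℝ^{d₁}. Then for every w' ∈ ℝ^d with ‖w' − w‖ ≤ δ/(4·C_g·L_g), one has ‖(Dg(w'))^* u‖² ≥ (δ/2)‖u‖² for all u ∈ ℝ^{d₁}. -/

import Mathlib

open scoped RealInnerProductSpace BigOperators

/-- If `g` is `Cg`-Lipschitz and `Lg`-smooth, `δ > 0`, and
`‖(Dg(w))^* u‖² ≥ δ‖u‖²` for all `u`, then for every `w'` with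
`‖w' − w‖ ≤ δ/(4·Cg·Lg)` one has `‖(Dg(w'))^* u‖² ≥ (δ/2)‖u‖²` for all `u`. -/
lemma stmt5_aux (δ Cg a b nu t : ℝ) (hδ : 0 < δ) (ha : 0 ≤ a) (hb : 0 ≤ b)
    (hnu : 0 ≤ nu) (ht0 : 0 ≤ t) (hd1 : b - a ≤ t * nu)
    (hau : a ≤ Cg * nu) (hbu : b ≤ Cg * nu)
    (ht : t * (4 * Cg) ≤ δ) (hwb : δ * nu ^ 2 ≤ b ^ 2) :
    δ / 2 * nu ^ 2 ≤ a ^ 2 := by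
  nlinarith [mul_le_mul_of_nonneg_right hd1 (add_nonneg hb ha),
    mul_le_mul_of_nonneg_left (add_le_add hbu hau) (mul_nonneg ht0 hnu),
    mul_le_mul_of_nonneg_right ht (sq_nonneg nu)]

theorem stmt5 (d d₁ : ℕ)
    (g : EuclideanSpace ℝ (Fin d) → EuclideanSpace ℝ (Fin d₁))
    (Cg Lg δ : ℝ)
    (hg_lip : ∀ x y : EuclideanSpace ℝ (Fin d), ‖g x - g y‖ ≤ Cg * ‖x - y‖)
    (hg_diff : Differentiable ℝ g)
    (hg_smooth : ∀ x y : EuclideanSpace ℝ (Fin d),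
      ‖fderiv ℝ g x - fderiv ℝ g y‖ ≤ Lg * ‖x - y‖)
    (hδ : 0 < δ)
    (w : EuclideanSpace ℝ (Fin d))
    (hw : ∀ u : EuclideanSpace ℝ (Fin d₁),
      δ * ‖u‖ ^ 2 ≤ ‖ContinuousLinearMap.adjoint (fderiv ℝ g w) u‖ ^ 2) :
    ∀ w' : EuclideanSpace ℝ (Fin d), ‖w' - w‖ ≤ δ / (4 * Cg * Lg) →
      ∀ u : EuclideanSpace ℝ (Fin d₁),
        δ / 2 * ‖u‖ ^ 2 ≤ ‖ContinuousLinearMap.adjoint (fderiv ℝ g w') u‖ ^ 2 := by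
  intro w' hw' u
  have hu2 : (0:ℝ) ≤ ‖u‖ ^ 2 := sq_nonneg _
  -- case Cg ≤ 0 : g is constant
  by_cases hCg : Cg ≤ 0
  · have hgc : ∀ x, g x = g w := by
      intro x
      have := hg_lip x w
      have h0 : ‖g x - g w‖ ≤ 0 :=
        this.trans (mul_nonpos_of_nonpos_of_nonneg hCg (norm_nonneg _))
      have := le_antisymm h0 (norm_nonneg _)
      rwa [norm_eq_zero, sub_eq_zero] at this
    have hconst : fderiv ℝ g w' = fderiv ℝ g w := by
      have hge : g = fun _ => g w := funext hgc
      rw [hge]; simp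
    rw [hconst]
    have := hw u
    nlinarith
  push_neg at hCg
  by_cases hLg : Lg ≤ 0
  · have hconst : fderiv ℝ g w' = fderiv ℝ g w := by
      have := hg_smooth w' w
      have h0 : ‖fderiv ℝ g w' - fderiv ℝ g w‖ ≤ 0 :=
        this.trans (mul_nonpos_of_nonpos_of_nonneg hLg (norm_nonneg _))
      have := le_antisymm h0 (norm_nonneg _)
      rwa [norm_eq_zero, sub_eq_zero] at this
    rw [hconst]
    have := hw u
    nlinarith
  push_neg at hLg
  set A := fderiv ℝ g w
  set A' := fderiv ℝ g w'
  set a := ‖ContinuousLinearMap.adjoint A' u‖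
  set b := ‖ContinuousLinearMap.adjoint A u‖
  have ha : 0 ≤ a := norm_nonneg _
  have hb : 0 ≤ b := norm_nonneg _
  -- bound on fderiv norms via Lipschitz
  have hlipW : LipschitzWith ⟨Cg, hCg.le⟩ g := by
    apply LipschitzWith.of_dist_le_mul
    intro x y
    rw [dist_eq_norm, dist_eq_norm]; exact hg_lip x y
  have hA : ‖A‖ ≤ Cg := by
    exact norm_fderiv_le_of_lipschitz ℝ (x₀ := w) hlipW
  have hA' : ‖A'‖ ≤ Cg := by
    exact norm_fderiv_le_of_lipschitz ℝ (x₀ := w') hlipW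
  have hadiff : ‖a - b‖ ≤ Lg * ‖w' - w‖ * ‖u‖ := by
    have h1 : ‖a - b‖ ≤ ‖ContinuousLinearMap.adjoint A' u - ContinuousLinearMap.adjoint A u‖ :=
      abs_norm_sub_norm_le _ _
    have h2 : ContinuousLinearMap.adjoint A' u - ContinuousLinearMap.adjoint A u
        = (ContinuousLinearMap.adjoint (A' - A)) u := by
      simp [map_sub]
    have h3 : ‖(ContinuousLinearMap.adjoint (A' - A)) u‖ ≤ ‖A' - A‖ * ‖u‖ := by
      calc ‖(ContinuousLinearMap.adjoint (A' - A)) u‖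
          ≤ ‖ContinuousLinearMap.adjoint (A' - A)‖ * ‖u‖ :=
            ContinuousLinearMap.le_opNorm _ _
        _ = ‖A' - A‖ * ‖u‖ := by rw [LinearIsometryEquiv.norm_map ContinuousLinearMap.adjoint (A' - A)]
    have h4 : ‖A' - A‖ * ‖u‖ ≤ Lg * ‖w' - w‖ * ‖u‖ :=
      mul_le_mul_of_nonneg_right (hg_smooth w' w) (norm_nonneg u)
    calc ‖a - b‖ ≤ _ := h1
      _ = ‖(ContinuousLinearMap.adjoint (A' - A)) u‖ := by rw [h2]
      _ ≤ Lg * ‖w' - w‖ * ‖u‖ := h3.trans h4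
  have hau : a ≤ Cg * ‖u‖ := by
    calc a ≤ ‖ContinuousLinearMap.adjoint A'‖ * ‖u‖ := ContinuousLinearMap.le_opNorm _ _
      _ ≤ Cg * ‖u‖ := by
          rw [LinearIsometryEquiv.norm_map ContinuousLinearMap.adjoint A']
          exact mul_le_mul_of_nonneg_right hA' (norm_nonneg u)
  have hbu : b ≤ Cg * ‖u‖ := by
    calc b ≤ ‖ContinuousLinearMap.adjoint A‖ * ‖u‖ := ContinuousLinearMap.le_opNorm _ _
      _ ≤ Cg * ‖u‖ := by
          rw [LinearIsometryEquiv.norm_map ContinuousLinearMap.adjoint A]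
          exact mul_le_mul_of_nonneg_right hA (norm_nonneg u)
  have ht : (Lg * ‖w' - w‖) * (4 * Cg) ≤ δ := by
    rw [le_div_iff₀ (by positivity : (0:ℝ) < 4 * Cg * Lg)] at hw'
    nlinarith [hw']
  have habs : |a - b| ≤ Lg * ‖w' - w‖ * ‖u‖ := by
    simpa [Real.norm_eq_abs] using hadiff
  have hd1 : b - a ≤ (Lg * ‖w' - w‖) * ‖u‖ := by
    have := abs_le.mp habs; linarith [this.1]
  exact stmt5_aux δ Cg a b ‖u‖ (Lg * ‖w' - w‖) hδ ha hb (norm_nonneg u)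
    (by positivity) hd1 hau hbu ht (hw u)
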